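/- Let p, s, d, n, m, l be positive integers with p < s, m < l, l + p = m + s, l > s and m > p. If the function Γ((z+2m)/(2p))Γ((z+p+n)/(2p))/(Γ(z/(2p))Γ((z+2m+p+n)/(2p))) is a rational function of z, then 2p divides 2m or 2p divides p + n. -/

import Mathlib

open Complex

lemma gamma_pos_real_ne_zero (x : ℝ) (hx : 0 < x) : Complex.Gamma (x : ℂ) ≠ 0 := by
  rw [Complex.Gamma_ofReal]
  exact_mod_cast (Real.Gamma_pos_of_pos hx).ne'

/-- If `Γ((z+2m)/(2p))Γ((z+p+n)/(2p)) / (Γ(z/(2p))Γ((z+2m+p+n)/(2p)))` is a rational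
function, then `2p ∣ 2m` or `2p ∣ p + n`. -/
theorem dvd_of_gamma_quotient_rational (p s d n m l : ℕ)
    (hp : 0 < p) (hs : 0 < s) (hd : 0 < d) (hn : 0 < n) (hm : 0 < m) (hl : 0 < l)
    (hps : p < s) (hml : m < l) (hsum : l + p = m + s) (hls : s < l) (hmp : p < m)
    (hrat : ∃ P Q : Polynomial ℂ, Q ≠ 0 ∧ ∀ z : ℂ,
        Gamma (z / (2 * p)) * Gamma ((z + 2 * m + p + n) / (2 * p)) ≠ 0 →
          Gamma ((z + 2 * m) / (2 * p)) * Gamma ((z + p + n) / (2 * p)) /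
              (Gamma (z / (2 * p)) * Gamma ((z + 2 * m + p + n) / (2 * p)))
            = P.eval z / Q.eval z) :
    2 * p ∣ 2 * m ∨ 2 * p ∣ p + n := by
  by_contra hcon
  push_neg at hcon
  obtain ⟨h1, h2⟩ := hcon
  obtain ⟨P, Q, hQ, hPQ⟩ := hrat
  have hp2 : (2 * (p : ℂ)) ≠ 0 := by
    have : (p : ℂ) ≠ 0 := Nat.cast_ne_zero.mpr hp.ne'
    simp [this]
  have hp2' : ((2 : ℂ) * (p : ℕ)) ≠ 0 := hp2
  -- key roots
  have key : ∀ k : ℕ, (P * Q).IsRoot (-(2 * (m : ℂ)) - 2 * p * k) := by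
    intro k
    set z : ℂ := -(2 * (m : ℂ)) - 2 * p * k with hz
    have hden1 : Gamma (z / (2 * p)) ≠ 0 := by
      apply Complex.Gamma_ne_zero
      intro j hj
      apply h1
      have hj' : z = -(j : ℂ) * (2 * p) := by
        rw [div_eq_iff hp2] at hj
        linear_combination hj
      rw [hz] at hj'
      have hnat : 2 * m + 2 * p * k = 2 * p * j := by
        have : ((2 * m + 2 * p * k : ℕ) : ℂ) = ((2 * p * j : ℕ) : ℂ) := by
          push_cast
          linear_combination -hj'
        exact_mod_cast this
      have hZ : ((2 * p : ℕ) : ℤ) ∣ ((2 * m : ℕ) : ℤ) := ⟨(j : ℤ) - k, by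
        have h' : ((2 * m + 2 * p * k : ℕ) : ℤ) = ((2 * p * j : ℕ) : ℤ) := by exact_mod_cast hnat
        push_cast at h' ⊢
        linear_combination h'⟩
      exact_mod_cast hZ
    have hden2 : Gamma ((z + 2 * m + p + n) / (2 * p)) ≠ 0 := by
      apply Complex.Gamma_ne_zero
      intro j hj
      apply h2
      have hj' : z + 2 * m + p + n = -(j : ℂ) * (2 * p) := by
        rw [div_eq_iff hp2] at hj
        linear_combination hj
      rw [hz] at hj'
      have hnat : p + n + 2 * p * j = 2 * p * k := by
        have : ((p + n + 2 * p * j : ℕ) : ℂ) = ((2 * p * k : ℕ) : ℂ) := by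
          push_cast
          linear_combination hj'
        exact_mod_cast this
      have hZ : ((2 * p : ℕ) : ℤ) ∣ ((p + n : ℕ) : ℤ) := ⟨(k : ℤ) - j, by
        have h' : ((p + n + 2 * p * j : ℕ) : ℤ) = ((2 * p * k : ℕ) : ℤ) := by exact_mod_cast hnat
        push_cast at h' ⊢
        linear_combination h'⟩
      exact_mod_cast hZ
    have hnum : Gamma ((z + 2 * m) / (2 * p)) = 0 := by
      have : (z + 2 * (m : ℂ)) / (2 * p) = -(k : ℕ) := by
        rw [hz, div_eq_iff hp2]; ring
      rw [this]
      exact Complex.Gamma_neg_nat_eq_zero k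
    have h := hPQ z (mul_ne_zero hden1 hden2)
    rw [hnum, zero_mul, zero_div] at h
    have := h.symm
    rw [div_eq_zero_iff] at this
    simp only [Polynomial.IsRoot, Polynomial.eval_mul]
    rcases this with h' | h'
    · rw [h', zero_mul]
    · rw [h', mul_zero]
  have hPQ0 : P * Q = 0 := by
    apply Polynomial.eq_zero_of_infinite_isRoot
    refine Set.infinite_of_injective_forall_mem
      (f := fun k : ℕ => -(2 * (m : ℂ)) - 2 * p * k) ?_ key
    intro a b hab
    simp only at hab
    have h' : (2 : ℂ) * p * a = 2 * p * b := by linear_combination -hab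
    have h'' : (a : ℂ) = b := mul_left_cancel₀ hp2 h'
    exact_mod_cast h''
  have hP0 : P = 0 := by
    rcases mul_eq_zero.mp hPQ0 with h | h
    · exact h
    · exact absurd h hQ
  -- evaluate at z = 1
  have hpR : (0 : ℝ) < 2 * p := by positivity
  have c1 : ((1 : ℂ)) / (2 * p) = (((1 : ℝ) / (2 * p) : ℝ) : ℂ) := by push_cast; ring
  have c2 : ((1 : ℂ) + 2 * m + p + n) / (2 * p) = ((((1 + 2 * m + p + n : ℝ)) / (2 * p) : ℝ) : ℂ) := by
    push_cast; ring
  have c3 : ((1 : ℂ) + 2 * m) / (2 * p) = ((((1 + 2 * m : ℝ)) / (2 * p) : ℝ) : ℂ) := by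
    push_cast; ring
  have c4 : ((1 : ℂ) + p + n) / (2 * p) = ((((1 + p + n : ℝ)) / (2 * p) : ℝ) : ℂ) := by
    push_cast; ring
  have g1 : Gamma ((1 : ℂ) / (2 * p)) ≠ 0 := by
    rw [c1]; exact gamma_pos_real_ne_zero _ (by positivity)
  have g2 : Gamma (((1 : ℂ) + 2 * m + p + n) / (2 * p)) ≠ 0 := by
    rw [c2]; exact gamma_pos_real_ne_zero _ (by positivity)
  have g3 : Gamma (((1 : ℂ) + 2 * m) / (2 * p)) ≠ 0 := by
    rw [c3]; exact gamma_pos_real_ne_zero _ (by positivity)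
  have g4 : Gamma (((1 : ℂ) + p + n) / (2 * p)) ≠ 0 := by
    rw [c4]; exact gamma_pos_real_ne_zero _ (by positivity)
  have h := hPQ 1 (mul_ne_zero g1 g2)
  rw [hP0] at h
  simp only [Polynomial.eval_zero, zero_div] at h
  exact (div_ne_zero (mul_ne_zero g3 g4) (mul_ne_zero g1 g2)) h
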